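/- Let G be a partially ordered group with identity e and positive cone G⁺ = {x ∈ G : x > e}, and let H⁺ be the set of all atoms of G⁺. Let 𝒥 be a set of nonempty finite subsets of G⁺ such that the open interval (e, x) belongs to 𝒥 for every x ∈ G⁺ \ H⁺. Let A and B be subsets of G⁺ with H⁺ ⊆ A ∪ B. If σ_𝒥(A) + σ_𝒥(B) > 1, then AB = G⁺ ∪ {e}. -/

import Mathlib

/-- The density `σ_𝒥(A) = inf { |A ∩ J| / |J| : J ∈ 𝒥 }` determined by a
collection `𝒥` of subsets of `X`. -/
noncomputable def densJ {X : Type*} (𝒥 : Set (Set X)) (A : Set X) : ℝ :=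
  sInf ((fun J => ((A ∩ J).ncard : ℝ) / (J.ncard : ℝ)) '' 𝒥)

/-- The product set `AB = {ab : a ∈ A ∪ {e}, b ∈ B ∪ {e}}`. -/
def prodset {G : Type*} [Group G] (A B : Set G) : Set G :=
  {g | ∃ a ∈ A ∪ {1}, ∃ b ∈ B ∪ {1}, a * b = g}

/-- Let `H⁺` be the set of atoms of the positive cone `G⁺`, suppose
`(e, x) ∈ 𝒥` for every `x ∈ G⁺ \ H⁺`, and let `A, B ⊆ G⁺` with
`H⁺ ⊆ A ∪ B`. If `σ_𝒥(A) + σ_𝒥(B) > 1`, then `AB = G⁺ ∪ {e}`. -/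
theorem prodset_eq_cone_of_one_lt_add_densJ
    {G : Type*} [Group G] [PartialOrder G]
    [CovariantClass G G (· * ·) (· ≤ ·)]
    [CovariantClass G G (Function.swap (· * ·)) (· ≤ ·)]
    (𝒥 : Set (Set G))
    (h𝒥 : ∀ J ∈ 𝒥, J.Nonempty ∧ J.Finite ∧ J ⊆ Set.Ioi (1 : G))
    (hatoms : ∀ x ∈ Set.Ioi (1 : G) \ {y ∈ Set.Ioi (1 : G) | Set.Ioo (1 : G) y = ∅},
      Set.Ioo (1 : G) x ∈ 𝒥)
    (A B : Set G) (hA : A ⊆ Set.Ioi 1) (hB : B ⊆ Set.Ioi 1)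
    (hAB : {y ∈ Set.Ioi (1 : G) | Set.Ioo (1 : G) y = ∅} ⊆ A ∪ B)
    (hd : 1 < densJ 𝒥 A + densJ 𝒥 B) :
    prodset A B = Set.Ioi (1 : G) ∪ {1} := by
  ext g
  simp only [prodset, Set.mem_setOf_eq]
  constructor
  · rintro ⟨a, ha, b, hb, rfl⟩
    rcases ha with ha | ha
    · have h1 : (1 : G) < a := hA ha
      rcases hb with hb | hb
      · exact Or.inl (one_lt_mul'' h1 (hB hb))
      · simp only [Set.mem_singleton_iff] at hb; subst hb
        exact Or.inl (by simpa using h1)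
    · simp only [Set.mem_singleton_iff] at ha; subst ha
      rcases hb with hb | hb
      · exact Or.inl (by simpa using hB hb)
      · simp only [Set.mem_singleton_iff] at hb; subst hb
        exact Or.inr (by simp)
  · rintro (hg | hg)
    · by_cases hat : Set.Ioo (1 : G) g = ∅
      · rcases hAB ⟨hg, hat⟩ with h | h
        · exact ⟨g, Or.inl h, 1, Or.inr rfl, mul_one g⟩
        · exact ⟨1, Or.inr rfl, g, Or.inl h, one_mul g⟩
      · have hJ : Set.Ioo (1 : G) g ∈ 𝒥 := hatoms g ⟨hg, fun h => hat h.2⟩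
        obtain ⟨hne, hfin, hsub⟩ := h𝒥 _ hJ
        set J := Set.Ioo (1 : G) g with hJdef
        have hbdd : BddBelow ((fun K => ((A ∩ K).ncard : ℝ) / (K.ncard : ℝ)) '' 𝒥) := by
          refine ⟨0, ?_⟩
          rintro r ⟨K, _, rfl⟩
          positivity
        have hbddB : BddBelow ((fun K => ((B ∩ K).ncard : ℝ) / (K.ncard : ℝ)) '' 𝒥) := by
          refine ⟨0, ?_⟩
          rintro r ⟨K, _, rfl⟩
          positivity
        have hAle : densJ 𝒥 A ≤ ((A ∩ J).ncard : ℝ) / (J.ncard : ℝ) :=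
          csInf_le hbdd ⟨J, hJ, rfl⟩
        have hBle : densJ 𝒥 B ≤ ((B ∩ J).ncard : ℝ) / (J.ncard : ℝ) :=
          csInf_le hbddB ⟨J, hJ, rfl⟩
        have hJpos : (0 : ℝ) < (J.ncard : ℝ) := by
          exact_mod_cast (Set.ncard_pos hfin).mpr hne
        have hsum : (J.ncard : ℝ) < ((A ∩ J).ncard : ℝ) + ((B ∩ J).ncard : ℝ) := by
          have h1 : (1 : ℝ) < ((A ∩ J).ncard : ℝ) / (J.ncard : ℝ)
              + ((B ∩ J).ncard : ℝ) / (J.ncard : ℝ) :=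
            lt_of_lt_of_le hd (add_le_add hAle hBle)
          rw [← add_div, lt_div_iff₀ hJpos, one_mul] at h1
          exact h1
        have hcard : J.ncard < (A ∩ J).ncard + (B ∩ J).ncard := by
          exact_mod_cast hsum
        -- the reflected set
        have hinj : Function.Injective (fun z : G => g * z⁻¹) := by
          intro x y h
          simpa using h
        set T : Set G := (fun z : G => g * z⁻¹) '' (B ∩ J) with hT
        have hTsub : T ⊆ J := by
          rintro _ ⟨z, ⟨_, hz1, hz2⟩, rfl⟩
          constructor
          · have := mul_lt_mul_left hz2 z⁻¹
            simpa using this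
          · have : g * z⁻¹ < g * 1 := mul_lt_mul_right (by simpa using hz1) g
            simpa using this
        have hTcard : T.ncard = (B ∩ J).ncard :=
          Set.ncard_image_of_injective _ hinj
        have hndisj : ¬ Disjoint (A ∩ J) T := by
          intro hdisj
          have hle : (A ∩ J).ncard + T.ncard ≤ J.ncard := by
            rw [← Set.ncard_union_eq hdisj ((hfin.subset Set.inter_subset_right))
              (hfin.subset hTsub)]
            exact Set.ncard_le_ncard (Set.union_subset Set.inter_subset_right hTsub) hfin
          rw [hTcard] at hle
          omega
        obtain ⟨x, hxA, hxT⟩ := Set.not_disjoint_iff.mp hndisj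
        obtain ⟨b, hb, hbx⟩ := hxT
        refine ⟨x, Or.inl hxA.1, b, Or.inl hb.1, ?_⟩
        rw [← hbx]
        exact inv_mul_cancel_right g b
    · simp only [Set.mem_singleton_iff] at hg; subst hg
      exact ⟨1, Or.inr rfl, 1, Or.inr rfl, mul_one 1⟩
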